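/- arXiv:math/0308181 — 3 statements merged into one kernel-verified Lean document; each statement's English description precedes it below -/
import Mathlib

section
/- Let τ be a positive Borel measure on ℝ with ∫ dτ(λ)/(1+λ²) < ∞, and suppose τ is invariant under translation by b (i.e., τ(Δ+b) = τ(Δ) for all Borel sets Δ). Then the function F(z) = ∫ [1/(λ−z) − λ/(1+λ²)] dτ(λ) defined for Im z ≠ 0 satisfies F(z+b) = F(z) for all nonreal z. -/
open MeasureTheory Complex

open Filter Topology

lemma aux_sub_ne (x : ℝ) (w : ℂ) (hw : w.im ≠ 0) : (x : ℂ) - w ≠ 0 := by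
  intro h
  rw [sub_eq_zero] at h
  apply hw
  rw [← h]
  simp

lemma aux_one_add_sq_ne (x : ℝ) : (1 : ℂ) + (x : ℂ) ^ 2 ≠ 0 := by
  have h : ((1 + x ^ 2 : ℝ) : ℂ) ≠ 0 := by
    exact_mod_cast ne_of_gt (by positivity : (0:ℝ) < 1 + x ^ 2)
  simpa using h

lemma aux_meas (w : ℂ) : Measurable (fun x : ℝ => 1 / ((x : ℂ) - w) - (x : ℂ) / (1 + (x : ℂ) ^ 2)) := by
  fun_prop

lemma aux_integrable (τ : Measure ℝ) (hfin : Integrable (fun l : ℝ => 1 / (1 + l ^ 2)) τ)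
    (w : ℂ) (hw : w.im ≠ 0) :
    Integrable (fun x : ℝ => 1 / ((x : ℂ) - w) - (x : ℂ) / (1 + (x : ℂ) ^ 2)) τ := by
  have him : (0:ℝ) < |w.im| := abs_pos.mpr hw
  set C : ℝ := (1 + ‖w‖ ^ 2) / |w.im| + ‖w‖ with hC
  apply Integrable.mono' (hfin.const_mul C) ((aux_meas w).aestronglyMeasurable)
  filter_upwards with x
  have hd1 : (x : ℂ) - w ≠ 0 := aux_sub_ne x w hw
  have hd2 : (1 : ℂ) + (x : ℂ) ^ 2 ≠ 0 := aux_one_add_sq_ne x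
  have heq : 1 / ((x : ℂ) - w) - (x : ℂ) / (1 + (x : ℂ) ^ 2)
      = (1 + (x : ℂ) * w) / (((x : ℂ) - w) * (1 + (x : ℂ) ^ 2)) := by
    field_simp
    ring
  have himle : |w.im| ≤ ‖(x : ℂ) - w‖ := by
    calc |w.im| = |((x : ℂ) - w).im| := by simp
    _ ≤ ‖(x : ℂ) - w‖ := Complex.abs_im_le_norm _
  have hdpos : (0:ℝ) < ‖(x : ℂ) - w‖ := lt_of_lt_of_le him himle
  have hxsq : ‖(1 : ℂ) + (x : ℂ) ^ 2‖ = 1 + x ^ 2 := by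
    rw [show (1 : ℂ) + (x : ℂ) ^ 2 = ((1 + x ^ 2 : ℝ) : ℂ) by push_cast; ring]
    rw [Complex.norm_real]
    exact abs_of_pos (by positivity)
  have hnum : ‖(1 : ℂ) + (x : ℂ) * w‖ ≤ C * ‖(x : ℂ) - w‖ := by
    have h1 : (1 : ℂ) + (x : ℂ) * w = (1 + w ^ 2) + w * ((x : ℂ) - w) := by ring
    calc ‖(1 : ℂ) + (x : ℂ) * w‖ = ‖(1 + w ^ 2) + w * ((x : ℂ) - w)‖ := by rw [h1]
    _ ≤ ‖(1 : ℂ) + w ^ 2‖ + ‖w‖ * ‖(x : ℂ) - w‖ := by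
        refine (norm_add_le _ _).trans ?_
        rw [norm_mul]
    _ ≤ (1 + ‖w‖ ^ 2) + ‖w‖ * ‖(x : ℂ) - w‖ := by
        gcongr
        refine (norm_add_le _ _).trans ?_
        simp [norm_pow]
    _ ≤ (1 + ‖w‖ ^ 2) / |w.im| * ‖(x : ℂ) - w‖ + ‖w‖ * ‖(x : ℂ) - w‖ := by
        gcongr
        rw [div_mul_eq_mul_div, le_div_iff₀ him]
        have : (0:ℝ) ≤ 1 + ‖w‖ ^ 2 := by positivity
        nlinarith [himle]
    _ = C * ‖(x : ℂ) - w‖ := by rw [hC]; ring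
  rw [heq, norm_div, norm_mul, hxsq]
  rw [div_le_iff₀ (by positivity)]
  calc ‖(1 : ℂ) + (x : ℂ) * w‖ ≤ C * ‖(x : ℂ) - w‖ := hnum
  _ = C * (1 / (1 + x ^ 2)) * (‖(x : ℂ) - w‖ * (1 + x ^ 2)) := by
      field_simp


-- norm bound for the DCT kernel
lemma aux_kernel_bound (b x y : ℝ) (hy : 1 + |b| ≤ y) :
    ‖(1 / ((x:ℂ) - ((y:ℂ) * I + b)) - 1 / ((x:ℂ) - (y:ℂ) * I))‖ ≤ 2 * |b| * (1 / (1 + x ^ 2)) := by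
  have hy1 : (1:ℝ) ≤ y := le_trans (le_add_of_nonneg_right (abs_nonneg b)) hy
  have hy0 : (0:ℝ) < y := lt_of_lt_of_le one_pos hy1
  have hw1 : ((y:ℂ) * I + b).im ≠ 0 := by simp [ne_of_gt hy0]
  have hw2 : ((y:ℂ) * I).im ≠ 0 := by simp [ne_of_gt hy0]
  have hd1 : (x:ℂ) - ((y:ℂ) * I + b) ≠ 0 := aux_sub_ne x _ hw1
  have hd2 : (x:ℂ) - (y:ℂ) * I ≠ 0 := aux_sub_ne x _ hw2
  have heq : 1 / ((x:ℂ) - ((y:ℂ) * I + b)) - 1 / ((x:ℂ) - (y:ℂ) * I)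
      = (b:ℂ) / (((x:ℂ) - ((y:ℂ) * I + b)) * ((x:ℂ) - (y:ℂ) * I)) := by
    field_simp
    ring
  rw [heq, norm_div, norm_mul, Complex.norm_real, Real.norm_eq_abs]
  set A := ‖(x:ℂ) - ((y:ℂ) * I + b)‖ with hA
  set B := ‖(x:ℂ) - (y:ℂ) * I‖ with hB
  have hA0 : 0 < A := norm_pos_iff.mpr hd1
  have hB0 : 0 < B := norm_pos_iff.mpr hd2
  have hA2 : A ^ 2 = (x - b) ^ 2 + y ^ 2 := by
    rw [hA, Complex.sq_norm, Complex.normSq_apply]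
    simp
    ring
  have hB2 : B ^ 2 = x ^ 2 + y ^ 2 := by
    rw [hB, Complex.sq_norm, Complex.normSq_apply]
    simp
    ring
  have key : 1 + x ^ 2 ≤ 2 * (A * B) := by
    have h1 : 1 + x ^ 2 ≤ B ^ 2 := by nlinarith
    have h2 : 1 + x ^ 2 ≤ 2 * A ^ 2 := by
      nlinarith [sq_nonneg (x - 2 * b), abs_nonneg b, _root_.sq_abs b, neg_abs_le b, le_abs_self b]
    have hsq : (1 + x ^ 2) ^ 2 ≤ (2 * (A * B)) ^ 2 := by nlinarith
    have h0 : (0:ℝ) ≤ 1 + x ^ 2 := by positivity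
    exact (pow_le_pow_iff_left₀ h0 (by positivity) (two_ne_zero)).mp hsq
  rw [div_le_iff₀ (by positivity)]
  have hb0 : (0:ℝ) ≤ |b| := abs_nonneg b
  have h1x : (0:ℝ) < 1 + x ^ 2 := by positivity
  calc |b| = |b| * (1 + x ^ 2) * (1 / (1 + x ^ 2)) := by field_simp
  _ ≤ |b| * (2 * (A * B)) * (1 / (1 + x ^ 2)) :=
      mul_le_mul_of_nonneg_right (mul_le_mul_of_nonneg_left key hb0) (by positivity)
  _ = 2 * |b| * (1 / (1 + x ^ 2)) * (A * B) := by ring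


lemma aux_inv_bound (x : ℝ) (w : ℂ) (c : ℝ) (hc : 0 < c) (him : c ≤ |w.im|) :
    ‖1 / ((x : ℂ) - w)‖ ≤ 1 / c := by
  have h1 : c ≤ ‖(x : ℂ) - w‖ := by
    refine le_trans him ?_
    calc |w.im| = |((x : ℂ) - w).im| := by simp
    _ ≤ ‖(x : ℂ) - w‖ := Complex.abs_im_le_norm _
  rw [norm_div, norm_one]
  exact one_div_le_one_div_of_le hc h1

/-- If `τ` is a positive Borel measure on `ℝ` with `∫ dτ(λ)/(1+λ²) < ∞` which is
invariant under translation by `b`, then the Herglotz function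
`F(z) = ∫ [1/(λ−z) − λ/(1+λ²)] dτ(λ)` satisfies `F(z+b) = F(z)` for nonreal `z`. -/
theorem stmt_0 (τ : Measure ℝ) (b : ℝ)
    (hfin : Integrable (fun l : ℝ => 1 / (1 + l ^ 2)) τ)
    (hinv : Measure.map (fun x : ℝ => x - b) τ = τ)
    (F : ℂ → ℂ)
    (hF : ∀ z : ℂ, z.im ≠ 0 →
      F z = ∫ l : ℝ, (1 / ((l : ℂ) - z) - (l : ℂ) / (1 + (l : ℂ) ^ 2)) ∂τ)
    (z : ℂ) (hz : z.im ≠ 0) :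
    F (z + (b : ℂ)) = F z := by
  classical
  set g : ℂ → ℝ → ℂ := fun w x => 1 / ((x : ℂ) - w) - (x : ℂ) / (1 + (x : ℂ) ^ 2) with hgdef
  -- translation invariance in the `+ b` direction
  have hmapb : Measure.map (fun x : ℝ => x + b) τ = τ := by
    conv_lhs => rw [← hinv]
    rw [Measure.map_map (by measurability) (by measurability)]
    have h : ((fun x : ℝ => x + b) ∘ fun x : ℝ => x - b) = id := by
      funext x; simp
    rw [h, Measure.map_id]
  have hmp : MeasurePreserving (fun x : ℝ => x + b) τ τ := ⟨by measurability, hmapb⟩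
  have hemb : MeasurableEmbedding (fun x : ℝ => x + b) :=
    (Homeomorph.addRight b).isClosedEmbedding.measurableEmbedding
  have hint : ∀ w : ℂ, w.im ≠ 0 → Integrable (g w) τ := fun w hw => aux_integrable τ hfin w hw
  have comp_int : ∀ w : ℂ, w.im ≠ 0 → Integrable (fun x : ℝ => g w (x + b)) τ := by
    intro w hw
    exact (hmp.integrable_comp (hint w hw).1).mpr (hint w hw)
  have hshift : ∀ w : ℂ, w.im ≠ 0 → ∫ x, g w x ∂τ = ∫ x, g w (x + b) ∂τ :=
    fun w _ => (hmp.integral_comp hemb (g w)).symm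
  -- the translation defect ψ, independent of w
  set ψ : ℝ → ℂ := fun x => (x : ℂ) / (1 + (x : ℂ) ^ 2)
      - ((x : ℂ) + b) / (1 + ((x : ℂ) + b) ^ 2) with hψdef
  have halg : ∀ (w : ℂ), w.im ≠ 0 → ∀ x : ℝ, g (w + b) (x + b) = g w x + ψ x := by
    intro w hw x
    have h1 : ((x + b : ℝ) : ℂ) - (w + b) ≠ 0 := aux_sub_ne (x + b) (w + b) (by simpa using hw)
    have h2 : (1 : ℂ) + ((x + b : ℝ) : ℂ) ^ 2 ≠ 0 := aux_one_add_sq_ne (x + b)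
    have h3 : (x : ℂ) - w ≠ 0 := aux_sub_ne x w hw
    have h4 : (1 : ℂ) + (x : ℂ) ^ 2 ≠ 0 := aux_one_add_sq_ne x
    simp only [hgdef, hψdef]
    push_cast
    push_cast at h1 h2
    field_simp
    ring
  have hIim : (Complex.I).im ≠ 0 := by simp
  have hψint : Integrable ψ τ := by
    have h := (comp_int (Complex.I + b) (by simpa using hIim)).sub (hint Complex.I hIim)
    refine h.congr (ae_of_all _ fun x => ?_)
    simp only [Pi.sub_apply]
    rw [halg Complex.I hIim x]
    ring
  -- key identity : F (w + b) = F w + ∫ ψ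
  have key : ∀ w : ℂ, w.im ≠ 0 → F (w + b) = F w + ∫ x, ψ x ∂τ := by
    intro w hw
    have hwb : (w + (b : ℂ)).im ≠ 0 := by simpa using hw
    rw [hF _ hwb, hF _ hw]
    have e1 : ∫ l : ℝ, (1 / ((l : ℂ) - (w + b)) - (l : ℂ) / (1 + (l : ℂ) ^ 2)) ∂τ
        = ∫ x, g (w + b) x ∂τ := rfl
    have e2 : ∫ l : ℝ, (1 / ((l : ℂ) - w) - (l : ℂ) / (1 + (l : ℂ) ^ 2)) ∂τ
        = ∫ x, g w x ∂τ := rfl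
    rw [e1, e2, hshift (w + b) hwb]
    have e3 : (fun x : ℝ => g (w + b) (x + b)) = fun x => g w x + ψ x :=
      funext (halg w hw)
    rw [e3, integral_add (hint w hw) hψint]
  -- ∫ ψ equals the integral of the z-free kernel for every nonreal w
  have hker : ∀ w : ℂ, w.im ≠ 0 →
      (∫ x, ψ x ∂τ) = ∫ x, (1 / ((x : ℂ) - (w + b)) - 1 / ((x : ℂ) - w)) ∂τ := by
    intro w hw
    have hwb : (w + (b : ℂ)).im ≠ 0 := by simpa using hw
    have h1 : F (w + b) - F w = ∫ x, ψ x ∂τ := by rw [key w hw]; abel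
    have h2 : F (w + b) - F w = ∫ x, (g (w + b) x - g w x) ∂τ := by
      rw [hF _ hwb, hF _ hw, ← integral_sub (hint (w + b) hwb) (hint w hw)]
    rw [← h1, h2]
    congr 1
    funext x
    simp only [hgdef]
    ring
  -- the sequence of heights
  set y : ℕ → ℝ := fun n => (n : ℝ) + 1 + |b| with hydef
  have hy : ∀ n, 1 + |b| ≤ y n := by
    intro n
    simp only [hydef]
    have h : (0:ℝ) ≤ (n : ℝ) := Nat.cast_nonneg n
    linarith
  have hy1 : ∀ n, (1:ℝ) ≤ y n := fun n =>
    le_trans (le_add_of_nonneg_right (abs_nonneg b)) (hy n)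
  have hyim : ∀ n, ((y n : ℂ) * I).im ≠ 0 := by
    intro n
    have h : (0:ℝ) < y n := lt_of_lt_of_le one_pos (hy1 n)
    simp [ne_of_gt h]
  set K : ℕ → ℝ → ℂ := fun n x =>
    1 / ((x : ℂ) - ((y n : ℂ) * I + b)) - 1 / ((x : ℂ) - (y n : ℂ) * I) with hKdef
  have hKconst : ∀ n, (∫ x, K n x ∂τ) = ∫ x, ψ x ∂τ := fun n => (hker _ (hyim n)).symm
  -- dominated convergence
  have hDCT : Tendsto (fun n => ∫ x, K n x ∂τ) atTop (𝓝 (∫ _x : ℝ, (0:ℂ) ∂τ)) := by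
    apply tendsto_integral_of_dominated_convergence (fun x : ℝ => 2 * |b| * (1 / (1 + x ^ 2)))
    · intro n
      apply Measurable.aestronglyMeasurable
      fun_prop
    · exact (hfin.const_mul (2 * |b|))
    · intro n
      filter_upwards with x
      exact aux_kernel_bound b x (y n) (hy n)
    · filter_upwards with x
      rw [tendsto_zero_iff_norm_tendsto_zero]
      have hb1 : ∀ n, ‖K n x‖ ≤ 2 / y n := by
        intro n
        have hpos : (0:ℝ) < y n := lt_of_lt_of_le one_pos (hy1 n)
        have hn1 : ‖(1:ℂ) / ((x : ℂ) - ((y n : ℂ) * I + b))‖ ≤ 1 / y n := by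
          refine aux_inv_bound x _ (y n) hpos ?_
          simp [abs_of_pos hpos]
        have hn2 : ‖(1:ℂ) / ((x : ℂ) - (y n : ℂ) * I)‖ ≤ 1 / y n := by
          refine aux_inv_bound x _ (y n) hpos ?_
          simp [abs_of_pos hpos]
        calc ‖K n x‖ ≤ ‖(1:ℂ) / ((x : ℂ) - ((y n : ℂ) * I + b))‖
            + ‖(1:ℂ) / ((x : ℂ) - (y n : ℂ) * I)‖ := norm_sub_le _ _
        _ ≤ 1 / y n + 1 / y n := add_le_add hn1 hn2
        _ = 2 / y n := by ring
      have hylim : Tendsto y atTop atTop := by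
        apply tendsto_atTop_add_const_right
        apply tendsto_atTop_add_const_right
        exact tendsto_natCast_atTop_atTop
      have h2y : Tendsto (fun n => 2 / y n) atTop (𝓝 0) := by
        have h := hylim.inv_tendsto_atTop.const_mul (2:ℝ)
        simpa [div_eq_mul_inv] using h
      exact squeeze_zero (fun n => norm_nonneg _) hb1 h2y
  -- conclude : ∫ ψ = 0
  rw [funext hKconst, integral_zero] at hDCT
  have hzero : (∫ x, ψ x ∂τ) = 0 := tendsto_nhds_unique tendsto_const_nhds hDCT
  rw [key z hz, hzero, add_zero]
end

section
/- For Im z > 0, ∫_ℝ (λz+1)/((λ−z)(1+λ²)) · (1/π) dλ = i, and for Im z < 0 the same integral equals −i. -/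
open MeasureTheory Complex Real Filter Topology

lemma quad_bound (a b l : ℝ) (hb : b ≠ 0) :
    1 + l ^ 2 ≤ (1 + (1 + a ^ 2) / b ^ 2) * ((l - a) ^ 2 + b ^ 2) := by
  have hb2 : 0 < b ^ 2 := by positivity
  have key : (1 + l ^ 2) * b ^ 2 ≤ (b ^ 2 + 1 + a ^ 2) * ((l - a) ^ 2 + b ^ 2) := by
    nlinarith [sq_nonneg ((1 + a ^ 2) * l - a * (1 + a ^ 2 + b ^ 2)), sq_nonneg (b ^ 2),
      sq_nonneg a, sq_nonneg b]
  have heq : (1 + (1 + a ^ 2) / b ^ 2) * ((l - a) ^ 2 + b ^ 2)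
      = (b ^ 2 + 1 + a ^ 2) * ((l - a) ^ 2 + b ^ 2) / b ^ 2 := by
    field_simp
    ring
  rw [heq, le_div_iff₀ hb2]
  exact key

lemma sub_ne (u : ℂ) (hu : u.im ≠ 0) (l : ℝ) : (l : ℂ) - u ≠ 0 := by
  intro h
  apply hu
  have := congrArg Complex.im h
  simpa using this.symm

lemma abs_sq_eq (u : ℂ) (l : ℝ) :
    (‖(l : ℂ) - u‖) ^ 2 = (l - u.re) ^ 2 + u.im ^ 2 := by
  rw [Complex.sq_norm, Complex.normSq_apply]
  simp [sub_re, sub_im]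
  ring

lemma one_add_sq_le (u : ℂ) (hu : u.im ≠ 0) (l : ℝ) :
    1 + l ^ 2 ≤ (1 + (1 + u.re ^ 2) / u.im ^ 2) * (‖(l : ℂ) - u‖) ^ 2 := by
  rw [abs_sq_eq]
  exact quad_bound u.re u.im l hu

lemma prod_bound (u v : ℂ) (hu : u.im ≠ 0) (hv : v.im ≠ 0) (l : ℝ) :
    1 + l ^ 2 ≤ max (1 + (1 + u.re ^ 2) / u.im ^ 2) (1 + (1 + v.re ^ 2) / v.im ^ 2) *
      (‖(l : ℂ) - u‖ * ‖(l : ℂ) - v‖) := by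
  set Cu := 1 + (1 + u.re ^ 2) / u.im ^ 2 with hCu
  set Cv := 1 + (1 + v.re ^ 2) / v.im ^ 2 with hCv
  have hCu0 : 0 < Cu := by rw [hCu]; positivity
  have hCv0 : 0 < Cv := by rw [hCv]; positivity
  have hau : 0 ≤ ‖(l : ℂ) - u‖ := norm_nonneg _
  have hav : 0 ≤ ‖(l : ℂ) - v‖ := norm_nonneg _
  have h1 := one_add_sq_le u hu l
  have h2 := one_add_sq_le v hv l
  have hl : 0 < 1 + l ^ 2 := by positivity
  refine le_of_pow_le_pow_left₀ two_ne_zero (by positivity) ?_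
  have hsq : (1 + l ^ 2) ^ 2 ≤ (Cu * ‖(l : ℂ) - u‖ ^ 2) *
      (Cv * ‖(l : ℂ) - v‖ ^ 2) := by
    rw [pow_two]
    exact mul_le_mul h1 h2 (le_of_lt hl) (by positivity)
  calc (1 + l ^ 2) ^ 2 ≤ (Cu * ‖(l : ℂ) - u‖ ^ 2) *
      (Cv * ‖(l : ℂ) - v‖ ^ 2) := hsq
    _ ≤ (max Cu Cv * (‖(l : ℂ) - u‖ * ‖(l : ℂ) - v‖)) ^ 2 := by
        have h3 : Cu ≤ max Cu Cv := le_max_left _ _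
        have h4 : Cv ≤ max Cu Cv := le_max_right _ _
        have := mul_le_mul (mul_le_mul_of_nonneg_right h3 (by positivity : (0:ℝ) ≤ ‖(l : ℂ) - u‖ ^ 2))
          (mul_le_mul_of_nonneg_right h4 (by positivity : (0:ℝ) ≤ ‖(l : ℂ) - v‖ ^ 2))
          (by positivity) (by positivity)
        calc (Cu * ‖(l : ℂ) - u‖ ^ 2) * (Cv * ‖(l : ℂ) - v‖ ^ 2)
            ≤ (max Cu Cv * ‖(l : ℂ) - u‖ ^ 2) * (max Cu Cv * ‖(l : ℂ) - v‖ ^ 2) := this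
          _ = (max Cu Cv * (‖(l : ℂ) - u‖ * ‖(l : ℂ) - v‖)) ^ 2 := by ring

lemma integrable_diff (u v : ℂ) (hu : u.im ≠ 0) (hv : v.im ≠ 0) :
    Integrable (fun l : ℝ => ((l : ℂ) - u)⁻¹ - ((l : ℂ) - v)⁻¹) := by
  set C := max (1 + (1 + u.re ^ 2) / u.im ^ 2) (1 + (1 + v.re ^ 2) / v.im ^ 2) with hC
  have hC0 : 0 < C := lt_max_of_lt_left (by positivity)
  have hcont : Continuous (fun l : ℝ => ((l : ℂ) - u)⁻¹ - ((l : ℂ) - v)⁻¹) := by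
    apply Continuous.sub
    · exact (Continuous.sub Complex.continuous_ofReal continuous_const).inv₀ (fun l => sub_ne u hu l)
    · exact (Continuous.sub Complex.continuous_ofReal continuous_const).inv₀ (fun l => sub_ne v hv l)
  refine Integrable.mono' ((integrable_inv_one_add_sq).const_mul (‖u - v‖ * C))
    hcont.aestronglyMeasurable (Filter.Eventually.of_forall fun l => ?_)
  have heq : ((l : ℂ) - u)⁻¹ - ((l : ℂ) - v)⁻¹ = (u - v) / (((l : ℂ) - u) * ((l : ℂ) - v)) := by
    field_simp [sub_ne u hu l, sub_ne v hv l]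
    ring
  rw [heq]
  have hnorm : ‖(u - v) / (((l : ℂ) - u) * ((l : ℂ) - v))‖
      = ‖u - v‖ / (‖(l : ℂ) - u‖ * ‖(l : ℂ) - v‖) := by
    rw [norm_div, norm_mul]
  rw [hnorm]
  have hl : 0 < 1 + l ^ 2 := by positivity
  have hprod : 0 < ‖(l : ℂ) - u‖ * ‖(l : ℂ) - v‖ := by
    apply mul_pos <;> · rw [norm_pos_iff]; first | exact sub_ne u hu l | exact sub_ne v hv l
  rw [div_le_iff₀ hprod]
  have hb := prod_bound u v hu hv l
  calc ‖u - v‖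
      = ‖u - v‖ * (1 + l ^ 2) * (1 + l ^ 2)⁻¹ := by field_simp
    _ ≤ ‖u - v‖ * (C * (‖(l : ℂ) - u‖ * ‖(l : ℂ) - v‖)) * (1 + l ^ 2)⁻¹ := by
        apply mul_le_mul_of_nonneg_right (mul_le_mul_of_nonneg_left hb (norm_nonneg _)) (by positivity)
    _ = ‖u - v‖ * C * (1 + l ^ 2)⁻¹ * (‖(l : ℂ) - u‖ * ‖(l : ℂ) - v‖) := by ring

lemma tendsto_abs_top (u : ℂ) :
    Tendsto (fun x : ℝ => ‖(x : ℂ) - u‖) atTop atTop := by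
  apply tendsto_atTop_mono (fun x => ?_) (tendsto_atTop_add_const_right _ (-u.re) tendsto_id)
  have := Complex.re_le_norm ((x : ℂ) - u)
  simpa [sub_eq_add_neg] using this

lemma tendsto_abs_bot (u : ℂ) :
    Tendsto (fun x : ℝ => ‖(x : ℂ) - u‖) atBot atTop := by
  apply tendsto_atTop_mono (fun x => ?_)
    (tendsto_atTop_add_const_right _ u.re tendsto_neg_atBot_atTop)
  have h := Complex.re_le_norm (u - (x : ℂ))
  rw [norm_sub_rev] at h
  simpa [sub_eq_add_neg, add_comm] using h

lemma tendsto_arcsin_div (u : ℂ) (c : ℝ) {l : Filter ℝ}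
    (h : Tendsto (fun x : ℝ => ‖(x : ℂ) - u‖) l atTop) :
    Tendsto (fun x : ℝ => Real.arcsin (c / ‖(x : ℂ) - u‖)) l (𝓝 0) := by
  have h0 : Tendsto (fun x : ℝ => c / ‖(x : ℂ) - u‖) l (𝓝 0) :=
    Tendsto.div_atTop tendsto_const_nhds h
  have := (Real.continuous_arcsin.tendsto 0).comp h0
  simpa [Function.comp_def] using this

lemma arg_top (u : ℂ) :
    Tendsto (fun x : ℝ => ((x : ℂ) - u).arg) atTop (𝓝 0) := by
  apply Tendsto.congr' ?_ (tendsto_arcsin_div u (-u.im) (tendsto_abs_top u))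
  filter_upwards [eventually_ge_atTop u.re] with x hx
  rw [Complex.arg_of_re_nonneg (by simpa using sub_nonneg.2 hx)]
  norm_num

lemma arg_bot (u : ℂ) (hu : u.im ≠ 0) :
    Tendsto (fun x : ℝ => ((x : ℂ) - u).arg) atBot (𝓝 (if 0 < u.im then -π else π)) := by
  rcases lt_or_gt_of_ne hu with hneg | hpos
  · rw [if_neg (by linarith)]
    have h := (tendsto_arcsin_div u u.im (tendsto_abs_bot u)).add_const π
    rw [zero_add] at h
    apply Tendsto.congr' ?_ h
    filter_upwards [eventually_lt_atBot u.re] with x hx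
    rw [Complex.arg_of_re_neg_of_im_nonneg (by simpa using sub_neg.2 hx)
      (by simp; linarith)]
    simp
  · rw [if_pos hpos]
    have h := (tendsto_arcsin_div u u.im (tendsto_abs_bot u)).sub_const π
    rw [zero_sub] at h
    apply Tendsto.congr' ?_ h
    filter_upwards [eventually_lt_atBot u.re] with x hx
    rw [Complex.arg_of_re_neg_of_im_neg (by simpa using sub_neg.2 hx)
      (by simp [hpos])]
    simp

lemma ratio_tendsto (u v : ℂ) (hv : v.im ≠ 0) {l : Filter ℝ}
    (habs : Tendsto (fun x : ℝ => ‖(x : ℂ) - v‖) l atTop) :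
    Tendsto (fun x : ℝ => ((x : ℂ) - u) / ((x : ℂ) - v)) l (𝓝 1) := by
  have h0 : Tendsto (fun x : ℝ => ((x : ℂ) - v)⁻¹) l (𝓝 0) := by
    rw [tendsto_zero_iff_norm_tendsto_zero]
    have := habs.inv_tendsto_atTop
    apply this.congr
    intro x
    simp
  have h1 : Tendsto (fun x : ℝ => 1 + (v - u) * ((x : ℂ) - v)⁻¹) l (𝓝 1) := by
    have := (tendsto_const_nhds (x := (1:ℂ)) (f := l)).add ((tendsto_const_nhds (x := v - u)).mul h0)
    simpa using this
  apply h1.congr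
  intro x
  field_simp [sub_ne v hv x]
  ring

lemma logabs_tendsto (u v : ℂ) (hu : u.im ≠ 0) (hv : v.im ≠ 0) {l : Filter ℝ}
    (habs : Tendsto (fun x : ℝ => ‖(x : ℂ) - v‖) l atTop) :
    Tendsto (fun x : ℝ => Real.log (‖(x : ℂ) - u‖)
      - Real.log (‖(x : ℂ) - v‖)) l (𝓝 0) := by
  have hr := ratio_tendsto u v hv habs
  have habs1 : Tendsto (fun x : ℝ => ‖(x : ℂ) - u‖ / ‖(x : ℂ) - v‖) l (𝓝 1) := by
    have := (continuous_norm.tendsto 1).comp hr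
    simpa [Function.comp_def, norm_div] using this
  have hlog : Tendsto (fun x : ℝ => Real.log (‖(x : ℂ) - u‖ / ‖(x : ℂ) - v‖)) l (𝓝 0) := by
    have := ((Real.continuousAt_log one_ne_zero).tendsto).comp habs1
    simpa [Function.comp_def] using this
  apply hlog.congr
  intro x
  rw [Real.log_div (norm_ne_zero_iff.mpr (sub_ne u hu x))
    (norm_ne_zero_iff.mpr (sub_ne v hv x))]

lemma G_hasDerivAt (u v : ℂ) (hu : u.im ≠ 0) (hv : v.im ≠ 0) (x : ℝ) :
    HasDerivAt (fun y : ℝ => Complex.log ((y : ℂ) - u) - Complex.log ((y : ℂ) - v))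
      (((x : ℂ) - u)⁻¹ - ((x : ℂ) - v)⁻¹) x := by
  have h1 : HasDerivAt (fun w : ℂ => Complex.log (w - u)) (((x : ℂ) - u)⁻¹) (x : ℂ) := by
    have hs : ((x : ℂ) - u) ∈ Complex.slitPlane :=
      Complex.mem_slitPlane_iff.2 (Or.inr (by simpa using hu))
    have := (Complex.hasDerivAt_log hs).comp (x : ℂ) ((hasDerivAt_id ((x : ℂ))).sub_const u)
    simpa [Function.comp_def] using this
  have h2 : HasDerivAt (fun w : ℂ => Complex.log (w - v)) (((x : ℂ) - v)⁻¹) (x : ℂ) := by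
    have hs : ((x : ℂ) - v) ∈ Complex.slitPlane :=
      Complex.mem_slitPlane_iff.2 (Or.inr (by simpa using hv))
    have := (Complex.hasDerivAt_log hs).comp (x : ℂ) ((hasDerivAt_id ((x : ℂ))).sub_const v)
    simpa [Function.comp_def] using this
  exact (h1.sub h2).comp_ofReal

lemma G_tendsto_top (u v : ℂ) (hu : u.im ≠ 0) (hv : v.im ≠ 0) :
    Tendsto (fun y : ℝ => Complex.log ((y : ℂ) - u) - Complex.log ((y : ℂ) - v))
      atTop (𝓝 0) := by
  have hre := logabs_tendsto u v hu hv (tendsto_abs_top v)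
  have him := (arg_top u).sub (arg_top v)
  rw [sub_zero] at him
  have h1 : Tendsto (fun y : ℝ =>
      ((Real.log (‖(y : ℂ) - u‖) - Real.log (‖(y : ℂ) - v‖) : ℝ) : ℂ)
      + ((((y : ℂ) - u).arg - ((y : ℂ) - v).arg : ℝ) : ℂ) * I) atTop (𝓝 0) := by
    have := ((Complex.continuous_ofReal.tendsto 0).comp hre).add
      (((Complex.continuous_ofReal.tendsto 0).comp him).mul_const I)
    simpa using this
  apply h1.congr
  intro y
  rw [Complex.log, Complex.log]
  push_cast
  ring

lemma G_tendsto_bot (u v : ℂ) (hu : u.im ≠ 0) (hv : v.im ≠ 0) :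
    Tendsto (fun y : ℝ => Complex.log ((y : ℂ) - u) - Complex.log ((y : ℂ) - v))
      atBot (𝓝 ((((if 0 < u.im then -π else π : ℝ) - (if 0 < v.im then -π else π : ℝ) : ℝ) : ℂ) * I)) := by
  have hre := logabs_tendsto u v hu hv (tendsto_abs_bot v)
  have him := (arg_bot u hu).sub (arg_bot v hv)
  have h1 : Tendsto (fun y : ℝ =>
      ((Real.log (‖(y : ℂ) - u‖) - Real.log (‖(y : ℂ) - v‖) : ℝ) : ℂ)
      + ((((y : ℂ) - u).arg - ((y : ℂ) - v).arg : ℝ) : ℂ) * I) atBot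
      (𝓝 ((((if 0 < u.im then -π else π : ℝ) - (if 0 < v.im then -π else π : ℝ) : ℝ) : ℂ) * I)) := by
    have := ((Complex.continuous_ofReal.tendsto 0).comp hre).add
      (((Complex.continuous_ofReal.tendsto _).comp him).mul_const I)
    simpa using this
  apply h1.congr
  intro y
  rw [Complex.log, Complex.log]
  push_cast
  ring

lemma integral_diff_eq (u v : ℂ) (hu : u.im ≠ 0) (hv : v.im ≠ 0) :
    ∫ l : ℝ, (((l : ℂ) - u)⁻¹ - ((l : ℂ) - v)⁻¹)
      = -((((if 0 < u.im then -π else π : ℝ) - (if 0 < v.im then -π else π : ℝ) : ℝ) : ℂ) * I) := by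
  have := integral_of_hasDerivAt_of_tendsto (G_hasDerivAt u v hu hv)
    (integrable_diff u v hu hv) (G_tendsto_bot u v hu hv) (G_tendsto_top u v hu hv)
  rw [this]
  ring

lemma integrable_second : Integrable (fun l : ℝ => I * (1 + (l : ℂ) ^ 2)⁻¹) := by
  have h := (integrable_inv_one_add_sq.ofReal (𝕜 := ℂ)).const_mul I
  apply h.congr
  filter_upwards with l
  norm_cast

lemma integral_second : ∫ l : ℝ, I * (1 + (l : ℂ) ^ 2)⁻¹ = (π : ℂ) * I := by
  have h1 : (fun l : ℝ => I * (1 + (l : ℂ) ^ 2)⁻¹)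
      = fun l : ℝ => I * (((1 + l ^ 2)⁻¹ : ℝ) : ℂ) := by
    funext l; push_cast; ring
  have h2 : ∫ (a : ℝ), (((1 + a ^ 2)⁻¹ : ℝ) : ℂ) = ((π : ℝ) : ℂ) := by
    rw [show ((π : ℝ) : ℂ) = ((∫ (a : ℝ), (1 + a ^ 2)⁻¹ : ℝ) : ℂ) by rw [integral_univ_inv_one_add_sq]]
    exact integral_ofReal (𝕜 := ℂ)
  rw [h1, MeasureTheory.integral_const_mul, h2]
  ring

lemma one_add_sq_ne (l : ℝ) : (1 : ℂ) + (l : ℂ) ^ 2 ≠ 0 := by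
  have : ((1 + l ^ 2 : ℝ) : ℂ) ≠ 0 := by
    rw [Ne, Complex.ofReal_eq_zero]
    positivity
  simpa using this

/-- For nonreal `z`, `(1/π) ∫ (λz+1)/((λ−z)(1+λ²)) dλ` equals `i` in the upper
half-plane and `−i` in the lower half-plane. -/
theorem stmt_5 (z : ℂ) :
    (0 < z.im →
      ∫ l : ℝ, ((l : ℂ) * z + 1) / (((l : ℂ) - z) * (1 + (l : ℂ) ^ 2)) * (1 / (π : ℂ)) = I) ∧
    (z.im < 0 →
      ∫ l : ℝ, ((l : ℂ) * z + 1) / (((l : ℂ) - z) * (1 + (l : ℂ) ^ 2)) * (1 / (π : ℂ)) = -I) := by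
  have hπ : (π : ℂ) ≠ 0 := by
    rw [Ne, Complex.ofReal_eq_zero]
    exact Real.pi_ne_zero
  have hI : Complex.I.im ≠ 0 := by simp
  have main : ∀ hz : z.im ≠ 0,
      ∫ l : ℝ, ((l : ℂ) * z + 1) / (((l : ℂ) - z) * (1 + (l : ℂ) ^ 2)) * (1 / (π : ℂ))
      = (-((((if 0 < z.im then -π else π : ℝ) - (-π : ℝ) : ℝ) : ℂ) * I) + (π : ℂ) * I) * (1 / (π : ℂ)) := by
    intro hz
    have hid : ∀ l : ℝ, ((l : ℂ) * z + 1) / (((l : ℂ) - z) * (1 + (l : ℂ) ^ 2))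
        = ((((l : ℂ) - z)⁻¹ - ((l : ℂ) - I)⁻¹) + I * (1 + (l : ℂ) ^ 2)⁻¹) := by
      intro l
      have h1 := sub_ne z hz l
      have h2 := sub_ne I hI l
      have h3 := one_add_sq_ne l
      field_simp
      ring_nf
      simp only [Complex.I_sq]
      ring
    rw [MeasureTheory.integral_mul_const]
    congr 1
    calc ∫ l : ℝ, ((l : ℂ) * z + 1) / (((l : ℂ) - z) * (1 + (l : ℂ) ^ 2))
        = ∫ l : ℝ, ((((l : ℂ) - z)⁻¹ - ((l : ℂ) - I)⁻¹) + I * (1 + (l : ℂ) ^ 2)⁻¹) := by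
          congr 1; funext l; exact hid l
      _ = (∫ l : ℝ, (((l : ℂ) - z)⁻¹ - ((l : ℂ) - I)⁻¹)) + ∫ l : ℝ, I * (1 + (l : ℂ) ^ 2)⁻¹ :=
          MeasureTheory.integral_add (integrable_diff z I hz hI) integrable_second
      _ = -((((if 0 < z.im then -π else π : ℝ) - (-π : ℝ) : ℝ) : ℂ) * I) + (π : ℂ) * I := by
          rw [integral_diff_eq z I hz hI, integral_second]
          norm_num
  constructor
  · intro hz
    rw [main (ne_of_gt hz), if_pos hz]
    push_cast
    field_simp
    ring
  · intro hz
    rw [main (ne_of_lt hz), if_neg (by linarith)]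
    push_cast
    field_simp
    ring
end

section
/- With σ, b, U as above, the unitary operator U and the multiplication operator (Hf)(λ) = λf(λ) on D(H) = { f ∈ L²(σ) : λf ∈ L²(σ) } satisfy U H U* = H − bI; equivalently, for all f ∈ D(H), U(Hf) = (H − bI)(Uf). -/
open MeasureTheory Complex ENNReal

private lemma denom_ne_zero (l b : ℝ) : (l : ℂ) - (b : ℂ) - I ≠ 0 := by
  intro h
  have := congrArg Complex.im h
  simp at this

private lemma norm_factor_sq (l b : ℝ) :
    ‖((l : ℂ) - I) / ((l : ℂ) - (b : ℂ) - I)‖ ^ 2 = (1 + l ^ 2) / (1 + (l - b) ^ 2) := by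
  rw [norm_div, div_pow]
  congr 1
  · rw [Complex.sq_norm]
    simp [Complex.normSq_apply]
    ring
  · rw [Complex.sq_norm]
    simp [Complex.normSq_apply]
    ring

/-- The key lemma: `U` maps `L²(σ)` to `L²(σ)`. -/
private lemma key (σ : Measure ℝ) (b : ℝ)
    (hinv : Measure.map (fun x : ℝ => x - b)
        (σ.withDensity fun l : ℝ => ENNReal.ofReal (1 + l ^ 2))
      = σ.withDensity fun l : ℝ => ENNReal.ofReal (1 + l ^ 2))
    (g : ℝ → ℂ) (hg : MemLp g 2 σ) :
    MemLp (fun l : ℝ => ((l : ℂ) - I) / ((l : ℂ) - (b : ℂ) - I) * g (l - b)) 2 σ := by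
  set w : ℝ → ℝ≥0∞ := fun l : ℝ => ENNReal.ofReal (1 + l ^ 2) with hw
  have hwpos : ∀ l : ℝ, (0:ℝ) < 1 + l ^ 2 := fun l => by positivity
  have hw_meas : Measurable w := by
    apply ENNReal.measurable_ofReal.comp
    fun_prop
  have hw0 : ∀ l, w l ≠ 0 := fun l => by
    simpa [hw] using (ENNReal.ofReal_pos.2 (hwpos l)).ne'
  have hwt : ∀ l, w l ≠ ∞ := fun l => ENNReal.ofReal_ne_top
  set μ := σ.withDensity w with hμ
  have hμσ : μ ≪ σ := withDensity_absolutelyContinuous _ _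
  have hσμ : σ ≪ μ := by
    have : μ.withDensity (fun x => (w x)⁻¹) = σ :=
      withDensity_inv_same hw_meas (ae_of_all _ hw0) (ae_of_all _ hwt)
    rw [← this]
    exact withDensity_absolutelyContinuous _ _
  have hemb : MeasurableEmbedding (fun x : ℝ => x - b) :=
    (Homeomorph.subRight b).measurableEmbedding
  have hmp : MeasurePreserving (fun x : ℝ => x - b) μ μ :=
    ⟨measurable_sub_const b, hinv⟩
  -- a.e. strong measurability
  have haesm : AEStronglyMeasurable
      (fun l : ℝ => ((l : ℂ) - I) / ((l : ℂ) - (b : ℂ) - I) * g (l - b)) σ := by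
    have h1 : AEStronglyMeasurable g μ := hg.1.mono_ac hμσ
    have h2 : AEStronglyMeasurable (fun l : ℝ => g (l - b)) μ := by
      have : AEStronglyMeasurable g (Measure.map (fun x : ℝ => x - b) μ) := by
        rw [hmp.map_eq]; exact h1
      exact hemb.aestronglyMeasurable_map_iff.1 this
    have hcont : Continuous (fun l : ℝ => ((l : ℂ) - I) / ((l : ℂ) - (b : ℂ) - I)) := by
      apply Continuous.div
      · fun_prop
      · fun_prop
      · exact fun l => denom_ne_zero l b
    exact hcont.aestronglyMeasurable.mul (h2.mono_ac hσμ)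
  refine ⟨haesm, ?_⟩
  rw [eLpNorm_lt_top_iff_lintegral_rpow_enorm_lt_top (by norm_num) (by norm_num)]
  simp only [enorm_eq_nnnorm]
  have htoReal : (2 : ℝ≥0∞).toReal = 2 := by norm_num
  rw [htoReal]
  -- pointwise identity in ℝ≥0∞
  have hpt : ∀ l : ℝ,
      (‖((l : ℂ) - I) / ((l : ℂ) - (b : ℂ) - I) * g (l - b)‖₊ : ℝ≥0∞) ^ (2:ℝ)
        = w l * ((w (l - b))⁻¹ * (‖g (l - b)‖₊ : ℝ≥0∞) ^ (2:ℝ)) := by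
    intro l
    have e1 : ∀ z : ℂ, ((‖z‖₊ : ℝ≥0∞)) ^ (2:ℝ) = ENNReal.ofReal (‖z‖ ^ 2) := by
      intro z
      rw [show (2:ℝ) = ((2:ℕ):ℝ) by norm_num, ENNReal.rpow_natCast,
        ENNReal.ofReal_pow (norm_nonneg z), ofReal_norm, enorm_eq_nnnorm]
    rw [e1, e1]
    rw [norm_mul, mul_pow, norm_factor_sq]
    rw [ENNReal.ofReal_mul (by positivity)]
    rw [ENNReal.ofReal_div_of_pos (hwpos (l - b)), ENNReal.div_eq_inv_mul]
    simp only [hw]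
    ring
  calc ∫⁻ l, (‖((l : ℂ) - I) / ((l : ℂ) - (b : ℂ) - I) * g (l - b)‖₊ : ℝ≥0∞) ^ (2:ℝ) ∂σ
      = ∫⁻ l, (w * fun l => (w (l - b))⁻¹ * (‖g (l - b)‖₊ : ℝ≥0∞) ^ (2:ℝ)) l ∂σ := by
        apply lintegral_congr
        intro l
        simpa using hpt l
    _ = ∫⁻ l, (w (l - b))⁻¹ * (‖g (l - b)‖₊ : ℝ≥0∞) ^ (2:ℝ) ∂μ := by
        rw [hμ, lintegral_withDensity_eq_lintegral_mul_non_measurable _ hw_meas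
          (ae_of_all _ fun l => lt_top_iff_ne_top.2 (hwt l))]
    _ = ∫⁻ t, (w t)⁻¹ * (‖g t‖₊ : ℝ≥0∞) ^ (2:ℝ) ∂μ :=
        hmp.lintegral_comp_emb hemb (fun t => (w t)⁻¹ * (‖g t‖₊ : ℝ≥0∞) ^ (2:ℝ))
    _ = ∫⁻ t, (w * fun t => (w t)⁻¹ * (‖g t‖₊ : ℝ≥0∞) ^ (2:ℝ)) t ∂σ := by
        rw [hμ, lintegral_withDensity_eq_lintegral_mul_non_measurable _ hw_meas
          (ae_of_all _ fun l => lt_top_iff_ne_top.2 (hwt l))]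
    _ = ∫⁻ t, (‖g t‖₊ : ℝ≥0∞) ^ (2:ℝ) ∂σ := by
        apply lintegral_congr
        intro t
        simp only [Pi.mul_apply, ← mul_assoc, ENNReal.mul_inv_cancel (hw0 t) (hwt t), one_mul]
    _ < ∞ := by
        have := hg.2
        rw [eLpNorm_lt_top_iff_lintegral_rpow_enorm_lt_top (by norm_num) (by norm_num)] at this
        simp only [enorm_eq_nnnorm] at this
        rwa [htoReal] at this

/-- With `σ, b, U` as in the periodic model, `U H U* = H − bI` for the multiplication
operator `(Hf)(λ) = λf(λ)`: `U` preserves the domain and `U(Hf) = (H − bI)(Uf)`. -/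
theorem stmt_10 (σ : Measure ℝ) [IsProbabilityMeasure σ] (b : ℝ)
    (hinv : Measure.map (fun x : ℝ => x - b)
        (σ.withDensity fun l : ℝ => ENNReal.ofReal (1 + l ^ 2))
      = σ.withDensity fun l : ℝ => ENNReal.ofReal (1 + l ^ 2))
    (f : ℝ → ℂ) (hf : MemLp f 2 σ)
    (hfm : MemLp (fun l : ℝ => (l : ℂ) * f l) 2 σ) :
    MemLp (fun l : ℝ => ((l : ℂ) - I) / ((l : ℂ) - (b : ℂ) - I) * f (l - b)) 2 σ ∧
    MemLp (fun l : ℝ =>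
      (l : ℂ) * (((l : ℂ) - I) / ((l : ℂ) - (b : ℂ) - I) * f (l - b))) 2 σ ∧
    ∀ l : ℝ,
      ((l : ℂ) - I) / ((l : ℂ) - (b : ℂ) - I) * (((l - b : ℝ) : ℂ) * f (l - b))
        = ((l : ℂ) - (b : ℂ)) * (((l : ℂ) - I) / ((l : ℂ) - (b : ℂ) - I) * f (l - b)) := by
  have h1 := key σ b hinv f hf
  have h2 := key σ b hinv (fun l => (l : ℂ) * f l) hfm
  refine ⟨h1, ?_, fun l => by push_cast; ring⟩
  have h3 : MemLp (fun l : ℝ =>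
      ((l : ℂ) - I) / ((l : ℂ) - (b : ℂ) - I) * (((l - b : ℝ) : ℂ) * f (l - b))
        + (b : ℂ) * (((l : ℂ) - I) / ((l : ℂ) - (b : ℂ) - I) * f (l - b))) 2 σ := by
    have := h2.add (h1.const_mul (b : ℂ))
    simpa [Pi.add_def, Complex.ofReal_sub] using this
  have heq : (fun l : ℝ =>
      ((l : ℂ) - I) / ((l : ℂ) - (b : ℂ) - I) * (((l - b : ℝ) : ℂ) * f (l - b))
        + (b : ℂ) * (((l : ℂ) - I) / ((l : ℂ) - (b : ℂ) - I) * f (l - b)))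
      = fun l : ℝ =>
      (l : ℂ) * (((l : ℂ) - I) / ((l : ℂ) - (b : ℂ) - I) * f (l - b)) := by
    funext l
    push_cast
    ring
  rwa [heq] at h3
end
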